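/- For an integer ℓ ≥ 2 and pairwise distinct reals L_2,...,L_ℓ in (0, ℓ) (none equal to an integer ≤ ℓ), the function P(n) = (-1)^ℓ (1/n!) (prod_{i=2}^ℓ L_i) sum_{i=2}^{ℓ} [ Γ(n-L_i)/Γ(2-L_i) prod_{j in {2,...,ℓ}\{i}} 1/(L_i - L_j) ], defined for integers n ≥ ℓ, sums to 1: sum_{n=ℓ}^∞ P(n) = 1. -/

import Mathlib

open Real Filter Finset Polynomial

private lemma gamma_div_fact_tendsto_zero (a L : ℝ) (c : ℕ) (ha : 0 < a) (hL : 0 < L)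
    (hac : a + L ≤ c + 1) :
    Tendsto (fun M : ℕ => Real.Gamma (M + a) / ((M + c).factorial : ℝ))
      atTop (nhds 0) := by
  set d : ℕ → ℝ := fun M => Real.Gamma (M + a) / ((M + c).factorial : ℝ) with hd
  have hpos : ∀ M : ℕ, 0 < d M := fun M =>
    div_pos (Real.Gamma_pos_of_pos (by positivity)) (by positivity)
  have hMc : ∀ M : ℕ, (0:ℝ) < M + c + 1 := fun M => by positivity
  have hrec : ∀ M : ℕ, d (M + 1) = d M * ((M + a) / (M + c + 1)) := by
    intro M
    have h1 : Real.Gamma (↑(M+1) + a) = (M + a) * Real.Gamma (M + a) := by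
      push_cast
      rw [show (M:ℝ) + 1 + a = (M + a) + 1 by ring, Real.Gamma_add_one (by positivity)]
    have h2 : ((M + 1 + c).factorial : ℝ) = (M + c + 1) * ((M + c).factorial : ℝ) := by
      rw [show M + 1 + c = (M + c) + 1 by ring, Nat.factorial_succ]
      push_cast; ring
    simp only [hd, h1, h2]
    field_simp
  have hbound : ∀ M : ℕ, d M ≤ d 0 * Real.exp (-L * ∑ k ∈ range M, ((k:ℝ) + c + 1)⁻¹) := by
    intro M
    induction M with
    | zero => simp
    | succ M ih =>
      rw [hrec M]
      have hfrac : (M + a) / (M + c + 1) ≤ Real.exp (-(L * ((M:ℝ) + c + 1)⁻¹)) := by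
        have h1 : (M + a) / (M + c + 1) ≤ 1 - L / (M + c + 1) := by
          rw [div_le_iff₀ (hMc M), sub_mul, one_mul,
            div_mul_cancel₀ _ (hMc M).ne']
          linarith
        refine h1.trans ?_
        have := Real.add_one_le_exp (-(L * ((M:ℝ) + c + 1)⁻¹))
        rw [div_eq_mul_inv]
        linarith
      have hfracpos : 0 ≤ (M + a) / (M + c + 1) := by positivity
      calc d M * ((M + a) / (M + c + 1))
          ≤ (d 0 * Real.exp (-L * ∑ k ∈ range M, ((k:ℝ) + c + 1)⁻¹)) *
              Real.exp (-(L * ((M:ℝ) + c + 1)⁻¹)) := by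
            apply mul_le_mul ih hfrac hfracpos (by positivity)
        _ = d 0 * Real.exp (-L * ∑ k ∈ range (M+1), ((k:ℝ) + c + 1)⁻¹) := by
            rw [mul_assoc, ← Real.exp_add, sum_range_succ]
            congr 2
            ring
  have hsum : Tendsto (fun M : ℕ => ∑ k ∈ range M, ((k:ℝ) + c + 1)⁻¹) atTop atTop := by
    have h1 : Tendsto (fun M : ℕ => ((c:ℝ)+1)⁻¹ * ∑ k ∈ range M, (1:ℝ)/(k+1)) atTop atTop :=
      (tendsto_sum_range_one_div_nat_succ_atTop).const_mul_atTop (by positivity)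
    refine tendsto_atTop_mono (fun M => ?_) h1
    rw [mul_sum]
    refine sum_le_sum fun k _ => ?_
    rw [one_div, ← mul_inv, ← one_div, ← one_div]
    apply one_div_le_one_div_of_le (by positivity)
    nlinarith [Nat.cast_nonneg (α := ℝ) k, Nat.cast_nonneg (α := ℝ) c]
  have hexp : Tendsto (fun M : ℕ => d 0 * Real.exp (-L * ∑ k ∈ range M, ((k:ℝ) + c + 1)⁻¹))
      atTop (nhds 0) := by
    rw [show (0:ℝ) = d 0 * 0 by ring]
    apply Tendsto.const_mul
    apply Real.tendsto_exp_atBot.comp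
    exact Tendsto.const_mul_atTop_of_neg (by linarith : -L < 0) hsum
  exact squeeze_zero (fun M => (hpos M).le) hbound hexp

private lemma gamma_tail_hasSum (n : ℕ) (L : ℝ) (hL : 0 < L) (hLn : L < n + 1) :
    HasSum (fun m : ℕ => Real.Gamma ((m:ℝ) + (n + 1) - L) / ((m + (n + 1)).factorial : ℝ))
      (Real.Gamma ((n:ℝ) + 1 - L) / (L * (n.factorial : ℝ))) := by
  set g : ℕ → ℝ := fun M => Real.Gamma ((M:ℝ) + (n + 1) - L) with hg
  have hgpos : ∀ M : ℕ, 0 < g M := fun M => Real.Gamma_pos_of_pos (by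
    have : (0:ℝ) ≤ M := Nat.cast_nonneg M
    linarith)
  have hterm : ∀ m : ℕ, 0 ≤ g m / ((m + (n + 1)).factorial : ℝ) :=
    fun m => le_of_lt (div_pos (hgpos m) (by positivity))
  rw [hasSum_iff_tendsto_nat_of_nonneg hterm]
  have hgrec : ∀ M : ℕ, g (M + 1) = ((M:ℝ) + (n + 1) - L) * g M := by
    intro M
    have : ((M+1:ℕ):ℝ) + (n + 1) - L = ((M:ℝ) + (n + 1) - L) + 1 := by push_cast; ring
    have hp : (0:ℝ) < (M:ℝ) + (n + 1) - L := by
      have : (0:ℝ) ≤ M := Nat.cast_nonneg M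
      linarith
    rw [hg]
    simp only
    rw [this, Real.Gamma_add_one hp.ne']
  have key : ∀ M : ℕ, ∑ m ∈ range M, g m / ((m + (n + 1)).factorial : ℝ)
      = g 0 / (L * (n.factorial : ℝ)) - g M / (L * ((M + n).factorial : ℝ)) := by
    intro M
    induction M with
    | zero => simp
    | succ M ih =>
      rw [sum_range_succ, ih, hgrec M]
      have hfact : (((M + 1) + n).factorial : ℝ) = ((M:ℝ) + n + 1) * ((M + n).factorial : ℝ) := by
        rw [show (M + 1) + n = (M + n) + 1 by ring, Nat.factorial_succ]
        push_cast; ring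
      have hfact2 : ((M + (n+1)).factorial : ℝ) = ((M:ℝ) + n + 1) * ((M + n).factorial : ℝ) := by
        rw [show M + (n + 1) = (M + n) + 1 by ring, Nat.factorial_succ]
        push_cast; ring
      rw [hfact, hfact2]
      have h1 : ((M + n).factorial : ℝ) ≠ 0 := by positivity
      have h2 : (M:ℝ) + n + 1 ≠ 0 := by positivity
      field_simp
      ring
  simp only [key]
  rw [show Real.Gamma ((n:ℝ) + 1 - L) = g 0 by simp [hg]]
  have htend : Tendsto (fun M : ℕ => g M / (L * ((M + n).factorial : ℝ))) atTop (nhds 0) := by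
    have := (gamma_div_fact_tendsto_zero ((n:ℝ) + 1 - L) L n (by linarith) hL
      (by linarith)).const_mul (1/L)
    rw [mul_zero] at this
    convert this using 2 with M
    rw [hg]
    simp only
    rw [show (M:ℝ) + (n + 1) - L = (M:ℝ) + ((n:ℝ) + 1 - L) by ring]
    field_simp
  simpa using tendsto_const_nhds.sub htend

private lemma leadingCoeff_basisDivisor {F : Type*} [Field F] (x y : F) :
    (Lagrange.basisDivisor x y).leadingCoeff = (x - y)⁻¹ := by
  rw [Lagrange.basisDivisor, leadingCoeff_mul, leadingCoeff_C,
    (monic_X_sub_C y).leadingCoeff, mul_one]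

private lemma coeff_card_sub_one_eq_sum {F : Type*} [Field F] {ι : Type*} [DecidableEq ι]
    (s : Finset ι) (v : ι → F) (hvs : Set.InjOn v s) (f : F[X])
    (hdeg : f.degree < s.card) :
    f.coeff (s.card - 1) = ∑ i ∈ s, f.eval (v i) * ∏ j ∈ s.erase i, (v i - v j)⁻¹ := by
  conv_lhs => rw [Lagrange.eq_interpolate hvs hdeg]
  rw [Lagrange.interpolate_apply, finset_sum_coeff]
  refine Finset.sum_congr rfl fun i hi => ?_
  rw [coeff_C_mul]
  congr 1
  have hnd := Lagrange.natDegree_basis hvs hi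
  have h1 : (Lagrange.basis s v i).coeff (s.card - 1) = (Lagrange.basis s v i).leadingCoeff := by
    rw [Polynomial.leadingCoeff, hnd]
  rw [h1, Lagrange.basis, leadingCoeff_prod]
  exact Finset.prod_congr rfl fun j _ => leadingCoeff_basisDivisor _ _

private lemma Gamma_add_nat' (x : ℝ) (n : ℕ) (h : ∀ k : ℕ, k < n → x + k ≠ 0) :
    Real.Gamma (x + n) = (∏ k ∈ Finset.range n, (x + k)) * Real.Gamma x := by
  induction n with
  | zero => simp
  | succ n ih =>
    have hx : x + n ≠ 0 := h n (by omega)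
    rw [show x + (n+1:ℕ) = (x + n) + 1 by push_cast; ring, Real.Gamma_add_one hx,
      ih (fun k hk => h k (by omega)), prod_range_succ]
    ring

private lemma key_alg (ℓ : ℕ) (hℓ : 2 ≤ ℓ) (L : ℕ → ℝ)
    (hinj : Set.InjOn L (Finset.Icc 2 ℓ : Finset ℕ))
    (h0 : ∀ i ∈ Finset.Icc 2 ℓ, L i ≠ 0) :
    ∑ i ∈ Finset.Icc 2 ℓ, (∏ k ∈ Finset.Icc 2 (ℓ-1), (L i - (k:ℝ))) * (L i)⁻¹ *
        ∏ j ∈ (Finset.Icc 2 ℓ).erase i, (L i - L j)⁻¹ =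
      (∏ k ∈ Finset.Icc 2 (ℓ-1), (k:ℝ)) * ∏ j ∈ Finset.Icc 2 ℓ, (L j)⁻¹ := by
  obtain ⟨m, rfl⟩ := Nat.exists_eq_add_of_le hℓ
  set t : Finset ℕ := Finset.Icc 2 (2 + m) with ht
  have h0t : 0 ∉ t := by simp [ht]
  have hmem : ∀ i ∈ t, 2 ≤ i := by intro i hi; rw [ht, mem_Icc] at hi; exact hi.1
  set v : ℕ → ℝ := fun i => if i = 0 then 0 else L i with hvdef
  have hv : ∀ i ∈ t, v i = L i := fun i hi => if_neg (by have := hmem i hi; omega)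
  set s : Finset ℕ := insert 0 t with hs
  have hct : t.card = m + 1 := by rw [ht, Nat.card_Icc]; omega
  have hcs : s.card = m + 2 := by rw [hs, card_insert_of_notMem h0t, hct]
  have hvz : v 0 = 0 := if_pos rfl
  have hvne : ∀ i ∈ t, v i ≠ 0 := by
    intro i hi
    rw [hv i hi]; exact h0 i hi
  have hvs : Set.InjOn v s := by
    intro a ha b hb hab
    rw [hs, coe_insert, Set.mem_insert_iff, mem_coe] at ha hb
    rcases ha with rfl | ha <;> rcases hb with rfl | hb
    · rfl
    · exact absurd (hab.symm.trans hvz) (hvne b hb)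
    · exact absurd (hab.trans hvz) (hvne a ha)
    · rw [hv a ha, hv b hb] at hab
      exact hinj (by exact_mod_cast ha) (by exact_mod_cast hb) hab
  set f : Polynomial ℝ := ∏ k ∈ Finset.Icc 2 (2 + m - 1), (X - C (k:ℝ)) with hf
  have hck : (Finset.Icc 2 (2 + m - 1)).card = m := by rw [Nat.card_Icc]; omega
  have hmon : f.Monic := monic_prod_of_monic _ _ fun k _ => monic_X_sub_C _
  have hnd : f.natDegree = m := by
    rw [hf, natDegree_prod _ _ fun k _ => X_sub_C_ne_zero _]
    refine (Finset.sum_congr rfl fun (k : ℕ) _ => natDegree_X_sub_C ((k:ℝ))).trans ?_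
    rw [sum_const, smul_eq_mul, mul_one, hck]
  have hdeg : f.degree < s.card := by
    calc f.degree ≤ f.natDegree := degree_le_natDegree
    _ < s.card := by rw [hnd, hcs]; exact_mod_cast by omega
  have hc0 : f.coeff (s.card - 1) = 0 := by
    apply coeff_eq_zero_of_natDegree_lt; rw [hnd, hcs]; omega
  have hkey := (coeff_card_sub_one_eq_sum s v hvs f hdeg).symm.trans hc0
  rw [hs, sum_insert h0t, erase_insert h0t] at hkey
  have hterm : ∀ i ∈ t, f.eval (v i) * ∏ j ∈ (insert 0 t).erase i, (v i - v j)⁻¹ =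
      (∏ k ∈ Finset.Icc 2 (2 + m - 1), (L i - (k:ℝ))) * (L i)⁻¹ *
        ∏ j ∈ t.erase i, (L i - L j)⁻¹ := by
    intro i hi
    have hine : i ≠ 0 := by have := hmem i hi; omega
    rw [Finset.erase_insert_of_ne (Ne.symm hine), prod_insert (fun h => h0t (mem_of_mem_erase h)),
      hv i hi]
    have hv0 : v 0 = 0 := if_pos rfl
    rw [hv0, sub_zero]
    have : ∏ j ∈ t.erase i, (L i - v j)⁻¹ = ∏ j ∈ t.erase i, (L i - L j)⁻¹ :=
      prod_congr rfl fun j hj => by rw [hv j (mem_of_mem_erase hj)]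
    rw [this]
    have : f.eval (L i) = ∏ k ∈ Finset.Icc 2 (2 + m - 1), (L i - (k:ℝ)) := by
      rw [hf, eval_prod]; exact prod_congr rfl fun k _ => by simp
    rw [this]; ring
  rw [sum_congr rfl hterm] at hkey
  have hv0 : v 0 = 0 := if_pos rfl
  have hA : f.eval (v 0) * ∏ j ∈ t, (v 0 - v j)⁻¹ =
      -((∏ k ∈ Finset.Icc 2 (2 + m - 1), (k:ℝ)) * ∏ j ∈ t, (L j)⁻¹) := by
    have h1 : f.eval (v 0) = (-1:ℝ)^m * ∏ k ∈ Finset.Icc 2 (2 + m - 1), (k:ℝ) := by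
      rw [hv0, hf, eval_prod]
      refine (prod_congr rfl fun (k : ℕ) _ =>
        (by simp : eval 0 (X - C (k:ℝ)) = -1 * (k:ℝ))).trans ?_
      rw [prod_mul_distrib, prod_const, hck]
    have h2 : ∏ j ∈ t, (v 0 - v j)⁻¹ = (-1:ℝ)^(m+1) * ∏ j ∈ t, (L j)⁻¹ := by
      have hc : ∀ j ∈ t, (v 0 - v j)⁻¹ = -1 * (L j)⁻¹ := by
        intro j hj
        rw [hv0, hv j hj, zero_sub, ← neg_inv]; ring
      refine (prod_congr rfl hc).trans ?_
      rw [prod_mul_distrib, prod_const, hct]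
    have hodd : (-1:ℝ)^(m+1) * (-1:ℝ)^m = -1 := by
      rw [← pow_add]; exact Odd.neg_one_pow ⟨m, by ring⟩
    rw [h1, h2]
    calc ((-1:ℝ)^m * ∏ k ∈ Finset.Icc 2 (2+m-1), (k:ℝ)) * ((-1)^(m+1) * ∏ j ∈ t, (L j)⁻¹)
        = ((-1:ℝ)^(m+1) * (-1)^m) *
            ((∏ k ∈ Finset.Icc 2 (2+m-1), (k:ℝ)) * ∏ j ∈ t, (L j)⁻¹) := by ring
      _ = _ := by rw [hodd]; ring
  rw [hA] at hkey
  linarith [hkey]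

private lemma prod_range_shift (n : ℕ) (y : ℝ) :
    ∏ k ∈ Finset.range n, (2 - y + k) = ∏ j ∈ Finset.Icc 2 (n+1), ((j:ℝ) - y) := by
  induction n with
  | zero => rw [Finset.range_zero, Finset.prod_empty, Finset.Icc_eq_empty (by omega),
      Finset.prod_empty]
  | succ n ih =>
    rw [Finset.prod_range_succ, ih, Finset.prod_Icc_succ_top (by omega : 2 ≤ n + 1 + 1)]
    congr 1
    push_cast
    ring

private lemma prod_Icc_two_id (n : ℕ) : (∏ k ∈ Finset.Icc 2 (n+1), k) = (n+1).factorial := by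
  induction n with
  | zero => decide
  | succ n ih =>
    rw [Finset.prod_Icc_succ_top (by omega : 2 ≤ n + 1 + 1), ih,
      Nat.factorial_succ (n+1), Nat.mul_comm]

/-- For an integer `ℓ ≥ 2` and pairwise distinct reals `L_2, ..., L_ℓ` in
`(0, ℓ)`, none of them equal to an integer `≤ ℓ`, the Mecke discrete jump-time
probabilities
`P(n) = (-1)^ℓ (1/n!) (∏_{i=2}^ℓ L_i) ∑_{i=2}^ℓ Γ(n-L_i)/Γ(2-L_i) ∏_{j≠i} 1/(L_i-L_j)`
(for integers `n ≥ ℓ`) sum to `1`.  (The sum below runs over `m = n - ℓ ≥ 0`.) -/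
theorem mecke_jump_time_prob_measure (ℓ : ℕ) (hℓ : 2 ≤ ℓ) (L : ℕ → ℝ)
    (hinj : Set.InjOn L (Finset.Icc 2 ℓ : Finset ℕ))
    (hrange : ∀ i ∈ Finset.Icc 2 ℓ, 0 < L i ∧ L i < ℓ)
    (hint : ∀ i ∈ Finset.Icc 2 ℓ, ∀ m : ℤ, (m : ℝ) ≤ ℓ → L i ≠ m) :
    ∑' m : ℕ,
        (-1 : ℝ) ^ ℓ * (1 / ((m + ℓ).factorial : ℝ)) *
          (∏ i ∈ Finset.Icc 2 ℓ, L i) *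
          ∑ i ∈ Finset.Icc 2 ℓ,
            Gamma (((m : ℝ) + ℓ) - L i) / Gamma (2 - L i) *
              ∏ j ∈ (Finset.Icc 2 ℓ).erase i, 1 / (L i - L j) = 1 := by
  obtain ⟨n, rfl⟩ := Nat.exists_eq_add_of_le hℓ
  set t : Finset ℕ := Finset.Icc 2 (2 + n) with htdef
  have hL0 : ∀ i ∈ t, L i ≠ 0 := fun i hi => (hrange i hi).1.ne'
  have hG2 : ∀ i ∈ t, Real.Gamma (2 - L i) ≠ 0 := by
    intro i hi
    refine Real.Gamma_ne_zero fun k hk => ?_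
    have hLi : L i = (k:ℝ) + 2 := by linarith
    refine hint i hi ((k:ℤ) + 2) ?_ (by push_cast [hLi]; ring)
    have h2 := (hrange i hi).2
    push_cast
    rw [hLi] at h2
    push_cast at h2
    linarith
  set P : ℝ := ∏ i ∈ t, L i with hP
  set c : ℕ → ℝ := fun i =>
    (-1:ℝ)^(2+n) * P * (∏ j ∈ t.erase i, 1/(L i - L j)) / Real.Gamma (2 - L i) with hc
  have hHS : ∀ i ∈ t, HasSum
      (fun m : ℕ => c i * (Real.Gamma (((m:ℝ) + ↑(2+n)) - L i) / (((m + (2+n)).factorial : ℕ) : ℝ)))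
      (c i * (Real.Gamma ((↑(n+1):ℝ) + 1 - L i) / (L i * (((n+1).factorial : ℕ) : ℝ)))) := by
    intro i hi
    refine HasSum.mul_left _ ?_
    have h := gamma_tail_hasSum (n+1) (L i) (hrange i hi).1 (by
      have := (hrange i hi).2
      push_cast at this ⊢
      linarith)
    have hfun : (fun m : ℕ => Real.Gamma ((m:ℝ) + (↑(n+1) + 1) - L i)
          / (((m + ((n+1)+1)).factorial : ℕ) : ℝ))
        = fun m : ℕ => Real.Gamma (((m:ℝ) + ↑(2+n)) - L i) / (((m + (2+n)).factorial : ℕ) : ℝ) := by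
      funext m
      rw [show (m:ℝ) + (↑(n+1) + 1) - L i = ((m:ℝ) + ↑(2+n)) - L i by push_cast; ring,
        show m + ((n+1)+1) = m + (2+n) by omega]
    rw [hfun] at h
    exact h
  have hTotal := hasSum_sum hHS
  have hF : (fun m : ℕ => ∑ i ∈ t,
        c i * (Real.Gamma (((m:ℝ) + ↑(2+n)) - L i) / (((m + (2+n)).factorial : ℕ) : ℝ)))
      = fun m : ℕ =>
        (-1 : ℝ) ^ (2+n) * (1 / (((m + (2+n)).factorial : ℕ) : ℝ)) * P *
          ∑ i ∈ t, Real.Gamma (((m : ℝ) + ↑(2+n)) - L i) / Real.Gamma (2 - L i) *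
              ∏ j ∈ t.erase i, 1 / (L i - L j) := by
    funext m
    rw [Finset.mul_sum]
    refine Finset.sum_congr rfl fun i hi => ?_
    simp only [hc]
    ring
  rw [hF] at hTotal
  rw [hTotal.tsum_eq]
  -- final algebra
  have hGam : ∀ i ∈ t, Real.Gamma ((↑(n+1):ℝ) + 1 - L i)
      = (∏ k ∈ Finset.Icc 2 (n+1), ((k:ℝ) - L i)) * Real.Gamma (2 - L i) := by
    intro i hi
    have hne : ∀ k : ℕ, k < n → (2 - L i) + k ≠ 0 := by
      intro k hk h
      have hLi : L i = (k:ℝ) + 2 := by linarith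
      refine hint i hi ((k:ℤ) + 2) ?_ (by push_cast [hLi]; ring)
      push_cast
      have : (k:ℝ) ≤ n := by exact_mod_cast hk.le
      linarith
    have hgan := Gamma_add_nat' (2 - L i) n hne
    rw [show (2 - L i) + (n:ℝ) = (↑(n+1):ℝ) + 1 - L i by push_cast; ring] at hgan
    rw [hgan, prod_range_shift n (L i)]
  have hflip : ∀ i : ℕ, ∏ k ∈ Finset.Icc 2 (n+1), ((k:ℝ) - L i)
      = (-1:ℝ)^n * ∏ k ∈ Finset.Icc 2 (n+1), (L i - (k:ℝ)) := by
    intro i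
    have hcard : (Finset.Icc 2 (n+1)).card = n := by rw [Nat.card_Icc]; omega
    refine (Finset.prod_congr rfl fun (k : ℕ) _ =>
      (by ring : ((k:ℝ) - L i) = -1 * (L i - (k:ℝ)))).trans ?_
    rw [Finset.prod_mul_distrib, Finset.prod_const, hcard]
  have hsgnn : (-1:ℝ)^n * (-1:ℝ)^n = 1 := by
    rw [← pow_add]; exact Even.neg_one_pow ⟨n, rfl⟩
  have hfactne : (((n+1).factorial : ℕ) : ℝ) ≠ 0 := by positivity
  have hstep : ∀ i ∈ t, c i * (Real.Gamma ((↑(n+1):ℝ) + 1 - L i)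
        / (L i * (((n+1).factorial : ℕ) : ℝ)))
      = (P / (((n+1).factorial : ℕ) : ℝ)) *
          ((∏ k ∈ Finset.Icc 2 (n+1), (L i - (k:ℝ))) * (L i)⁻¹ *
            ∏ j ∈ t.erase i, (L i - L j)⁻¹) := by
    intro i hi
    have e1 : c i = (-1:ℝ)^n * P * (∏ j ∈ t.erase i, (L i - L j)⁻¹) / Real.Gamma (2 - L i) := by
      simp only [hc, one_div]
      rw [show (-1:ℝ)^(2+n) = (-1:ℝ)^n by rw [pow_add]; norm_num]
    rw [e1, hGam i hi, hflip i]
    calc ((-1:ℝ)^n * P * (∏ j ∈ t.erase i, (L i - L j)⁻¹) / Real.Gamma (2 - L i)) *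
          (((-1:ℝ)^n * ∏ k ∈ Finset.Icc 2 (n+1), (L i - (k:ℝ))) * Real.Gamma (2 - L i)
            / (L i * (((n+1).factorial : ℕ) : ℝ)))
        = ((-1:ℝ)^n * (-1:ℝ)^n) * ((Real.Gamma (2 - L i) / Real.Gamma (2 - L i)) *
            ((P / (((n+1).factorial : ℕ) : ℝ)) *
              ((∏ k ∈ Finset.Icc 2 (n+1), (L i - (k:ℝ))) * (L i)⁻¹ *
                ∏ j ∈ t.erase i, (L i - L j)⁻¹))) := by ring
      _ = _ := by rw [hsgnn, div_self (hG2 i hi)]; ring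
  have hsum : ∑ i ∈ t, c i * (Real.Gamma ((↑(n+1):ℝ) + 1 - L i)
        / (L i * (((n+1).factorial : ℕ) : ℝ)))
      = ∑ i ∈ t, (P / (((n+1).factorial : ℕ) : ℝ)) *
          ((∏ k ∈ Finset.Icc 2 (n+1), (L i - (k:ℝ))) * (L i)⁻¹ *
            ∏ j ∈ t.erase i, (L i - L j)⁻¹) := Finset.sum_congr rfl hstep
  rw [hsum, ← Finset.mul_sum]
  have hKA := key_alg (2+n) hℓ L hinj hL0
  rw [show 2 + n - 1 = n + 1 by omega] at hKA
  rw [hKA]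
  have hprodk : (∏ k ∈ Finset.Icc 2 (n+1), (k:ℝ)) = (((n+1).factorial : ℕ) : ℝ) := by
    rw [← prod_Icc_two_id n]
    push_cast
    rfl
  have hPinv : P * ∏ j ∈ t, (L j)⁻¹ = 1 := by
    rw [hP, ← Finset.prod_mul_distrib]
    exact Finset.prod_eq_one fun i hi => mul_inv_cancel₀ (hL0 i hi)
  rw [hprodk]
  calc P / (((n+1).factorial : ℕ) : ℝ) *
        ((((n+1).factorial : ℕ) : ℝ) * ∏ j ∈ t, (L j)⁻¹)
      = (P * ∏ j ∈ t, (L j)⁻¹) * ((((n+1).factorial : ℕ) : ℝ) / (((n+1).factorial : ℕ) : ℝ)) := by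
        ring
    _ = 1 := by rw [hPinv, div_self hfactne, one_mul]
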